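/- The map f : H → M₂(ℂ) sending q = a + b·i + c·j + d·k to (1/2)·[[a+c, d+i·b],[d−i·b, a−c]] is an injective real-linear map whose image is exactly the set of 2×2 complex Hermitian matrices, and f(q) is positive semi-definite if and only if q lies in the cone H_S = {q : Re q ≥ 0 and |Im q|² ≤ (Re q)²}. -/

import Mathlib

open Quaternion
open scoped ComplexOrder

def HS : Set ℍ[ℝ] := {q | 0 ≤ q.re ∧ ‖q.im‖ ^ 2 ≤ q.re ^ 2}

noncomputable def f (q : ℍ[ℝ]) : Matrix (Fin 2) (Fin 2) ℂ :=
  (1/2 : ℂ) •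
    !![(q.re : ℂ) + q.imJ, (q.imK : ℂ) + Complex.I * q.imI;
       (q.imK : ℂ) - Complex.I * q.imI, (q.re : ℂ) - q.imJ]

lemma norm_im_sq (q : ℍ[ℝ]) : ‖q.im‖ ^ 2 = q.imI ^ 2 + q.imJ ^ 2 + q.imK ^ 2 := by
  rw [sq, ← Quaternion.normSq_eq_norm_mul_self]
  simp [Quaternion.normSq_def', QuaternionAlgebra.im]

lemma key_ineq (a b c d u1 u2 v1 v2 : ℝ) (ha : 0 ≤ a) (h : b^2+c^2+d^2 ≤ a^2) :
    0 ≤ (a+c)*(u1^2+u2^2) + (a-c)*(v1^2+v2^2)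
      + 2*d*(u1*v1+u2*v2) - 2*b*(u1*v2-u2*v1) := by
  set U := u1^2+u2^2 with hU'
  set V := v1^2+v2^2 with hV'
  set P := u1*v1+u2*v2 with hP'
  set Q := u1*v2-u2*v1 with hQ'
  have hU : 0 ≤ U := by positivity
  have hV : 0 ≤ V := by positivity
  have h1 : 0 ≤ a+c := by nlinarith
  have h2 : 0 ≤ a-c := by nlinarith
  have hS : 0 ≤ (a+c)*U + (a-c)*V := by positivity
  have hL : P^2 + Q^2 = U*V := by rw [hU',hV',hP',hQ']; ring
  have hSq : (2*d*P - 2*b*Q)^2 ≤ ((a+c)*U + (a-c)*V)^2 := by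
    nlinarith [sq_nonneg ((a+c)*U - (a-c)*V), sq_nonneg (b*P + d*Q),
      mul_nonneg (mul_nonneg hU hV) (sub_nonneg.2 h)]
  nlinarith [hS, hSq]

lemma f_form (q : ℍ[ℝ]) (x : Fin 2 → ℂ) :
    dotProduct (star x) ((f q).mulVec x) =
      ((((q.re+q.imJ)*((x 0).re^2+(x 0).im^2) + (q.re-q.imJ)*((x 1).re^2+(x 1).im^2)
        + 2*q.imK*((x 0).re*(x 1).re+(x 0).im*(x 1).im)
        - 2*q.imI*((x 0).re*(x 1).im-(x 0).im*(x 1).re))/2 : ℝ) : ℂ) := by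
  simp only [f, Matrix.mulVec, dotProduct, Fin.sum_univ_two, Matrix.smul_apply,
    Matrix.cons_val', Matrix.cons_val_zero, Matrix.cons_val_one, Matrix.head_cons,
    Matrix.empty_val', Matrix.cons_val_fin_one, Matrix.head_fin_const, Matrix.of_apply,
    Pi.star_apply, smul_eq_mul]
  apply Complex.ext <;>
    simp [Complex.ext_iff, Complex.mul_re, Complex.mul_im, Complex.add_re, Complex.add_im,
      Complex.div_re, Complex.div_im, Complex.normSq, ← Complex.ofReal_pow, Complex.sub_re,
      Complex.sub_im] <;> ring

lemma f_herm (q : ℍ[ℝ]) : (f q).IsHermitian := by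
  unfold Matrix.IsHermitian f
  ext i j
  fin_cases i <;> fin_cases j <;>
    simp [Matrix.conjTranspose_apply, Complex.ext_iff]

lemma f_det (q : ℍ[ℝ]) :
    (f q).det = (((q.re^2 - (q.imI^2+q.imJ^2+q.imK^2))/4 : ℝ) : ℂ) := by
  rw [Matrix.det_fin_two]
  simp only [f, Matrix.smul_apply, Matrix.cons_val', Matrix.cons_val_zero,
    Matrix.cons_val_one, Matrix.head_cons, Matrix.empty_val', Matrix.cons_val_fin_one,
    Matrix.head_fin_const, Matrix.of_apply, smul_eq_mul]
  apply Complex.ext <;>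
    simp [Complex.ext_iff, Complex.mul_re, Complex.mul_im, Complex.add_re, Complex.add_im,
      Complex.div_re, Complex.div_im, Complex.normSq, ← Complex.ofReal_pow, Complex.sub_re,
      Complex.sub_im] <;> ring

theorem stmt_4 :
    Function.Injective f ∧
    (∀ q q' : ℍ[ℝ], f (q + q') = f q + f q') ∧
    (∀ (r : ℝ) (q : ℍ[ℝ]), f (r • q) = (r : ℂ) • f q) ∧
    Set.range f = {A : Matrix (Fin 2) (Fin 2) ℂ | A.IsHermitian} ∧
    (∀ q : ℍ[ℝ], (f q).PosSemidef ↔ q ∈ HS) := by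
  refine ⟨?_, ?_, ?_, ?_, ?_⟩
  · -- injective
    intro q q' h
    have e00 := congrFun (congrFun h 0) 0
    have e01 := congrFun (congrFun h 0) 1
    have e10 := congrFun (congrFun h 1) 0
    have e11 := congrFun (congrFun h 1) 1
    simp only [f, Matrix.smul_apply, Matrix.cons_val', Matrix.cons_val_zero,
      Matrix.cons_val_one, Matrix.head_cons, Matrix.empty_val', Matrix.cons_val_fin_one,
      Matrix.head_fin_const, Matrix.of_apply, smul_eq_mul] at e00 e01 e10 e11
    have hre : (q.re : ℂ) = q'.re := by linear_combination e00 + e11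
    have himJ : (q.imJ : ℂ) = q'.imJ := by linear_combination e00 - e11
    have himK : (q.imK : ℂ) = q'.imK := by linear_combination e01 + e10
    have himI : (q.imI : ℂ) = q'.imI := by
      linear_combination (-Complex.I) * (e01 - e10) +
        ((q.imI : ℂ) - q'.imI) * Complex.I_sq
    ext
    · exact_mod_cast hre
    · exact_mod_cast himI
    · exact_mod_cast himJ
    · exact_mod_cast himK
  · -- additive
    intro q q'
    ext i j
    fin_cases i <;> fin_cases j <;>
      simp [f, Matrix.add_apply] <;> ring
  · -- smul
    intro r q
    ext i j
    fin_cases i <;> fin_cases j <;>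
      simp [f, Matrix.smul_apply, smul_eq_mul] <;> ring
  · -- range
    ext A
    constructor
    · rintro ⟨q, rfl⟩
      exact f_herm q
    · intro hA
      refine ⟨⟨(A 0 0).re + (A 1 1).re, 2*(A 0 1).im, (A 0 0).re - (A 1 1).re,
        2*(A 0 1).re⟩, ?_⟩
      have h00 : (A 0 0).im = 0 := Complex.conj_eq_iff_im.mp (hA.apply 0 0)
      have h11 : (A 1 1).im = 0 := Complex.conj_eq_iff_im.mp (hA.apply 1 1)
      have h10 : A 1 0 = (starRingEnd ℂ) (A 0 1) := by
        have := hA.apply 0 1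
        rw [← this]
        simp
      ext i j
      fin_cases i <;> fin_cases j <;>
        simp [f, h10, Complex.ext_iff, Complex.mul_re, Complex.mul_im, Complex.add_re,
          Complex.add_im, Complex.sub_re, Complex.sub_im, Complex.div_re, Complex.div_im,
          Complex.normSq, h00, h11] <;> ring
  · -- PSD iff
    intro q
    constructor
    · intro hPSD
      have ha : 0 ≤ q.re := by
        have h1 := hPSD.dotProduct_mulVec_nonneg ![1, 0]
        have h2 := hPSD.dotProduct_mulVec_nonneg ![0, 1]
        rw [f_form] at h1 h2
        simp only [Matrix.cons_val_zero, Matrix.cons_val_one, Matrix.head_cons] at h1 h2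
        rw [Complex.zero_le_real] at h1 h2
        simp [Complex.one_re, Complex.one_im] at h1 h2
        linarith
      refine ⟨ha, ?_⟩
      rw [norm_im_sq]
      have hdet : (0:ℂ) ≤ (f q).det := by
        rw [hPSD.isHermitian.det_eq_prod_eigenvalues]
        rw [Fin.prod_univ_two]
        have e0 := hPSD.eigenvalues_nonneg 0
        have e1 := hPSD.eigenvalues_nonneg 1
        rw [← RCLike.ofReal_mul]
        exact RCLike.ofReal_nonneg.mpr (mul_nonneg e0 e1)
      rw [f_det, Complex.zero_le_real] at hdet
      nlinarith
    · rintro ⟨ha, h⟩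
      rw [norm_im_sq] at h
      refine Matrix.PosSemidef.of_dotProduct_mulVec_nonneg (f_herm q) fun x => ?_
      rw [f_form, Complex.zero_le_real]
      have := key_ineq q.re q.imI q.imJ q.imK (x 0).re (x 0).im (x 1).re (x 1).im ha
        (by linarith)
      linarith
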